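/- One-point basis maker correctness: let n ≥ 1, let E_1,…,E_n be λ-terms, and let D be a λ-term in which the variable b does not occur free such that (D c_k) =βη E_k for each 1 ≤ k ≤ n. Put M = λmba.(Zero b ⟨m, (Succ a)⟩ (D b)) and X = ⟨M, c_0⟩ (with m, b, a fresh variables). Then for each 1 ≤ k ≤ n, the application of X to the left-associated application of k+1 copies of X satisfies (X (X X ⋯ X)) =βη E_k; in particular every E_k is generated by the single term X. -/

import Mathlib

namespace LC

/-- Untyped λ-terms, de Bruijn indices. -/
inductive Tm : Type
  | var : ℕ → Tm
  | app : Tm → Tm → Tm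
  | lam : Tm → Tm
  deriving DecidableEq

namespace Tm

/-- Shift the free variables ≥ c up by one. -/
def lift (c : ℕ) : Tm → Tm
  | var n => if n < c then var n else var (n + 1)
  | app a b => app (lift c a) (lift c b)
  | lam a => lam (lift (c + 1) a)

/-- Substitute `s` for the free variable `k`. -/
def subst (k : ℕ) (s : Tm) : Tm → Tm
  | var n => if n = k then s else if k < n then var (n - 1) else var n
  | app a b => app (subst k s a) (subst k s b)
  | lam a => lam (subst (k + 1) (lift 0 s) a)

/-- One-step βη-reduction (with congruence closure). -/
inductive Step : Tm → Tm → Prop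
  | beta (a b : Tm) : Step (app (lam a) b) (subst 0 b a)
  | eta (a : Tm) : Step (lam (app (lift 0 a) (var 0))) a
  | appL {a a' : Tm} (b : Tm) : Step a a' → Step (app a b) (app a' b)
  | appR (a : Tm) {b b' : Tm} : Step b b' → Step (app a b) (app a b')
  | lamCongr {a a' : Tm} : Step a a' → Step (lam a) (lam a')

/-- βη-equivalence: the equivalence relation generated by βη-reduction. -/
def BetaEta : Tm → Tm → Prop := Relation.EqvGen Step

/-- Multi-step βη-reduction: reflexive-transitive closure of βη-reduction. -/
def Reduces : Tm → Tm → Prop := Relation.ReflTransGen Step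

/-- I = λx.x -/
def I : Tm := lam (var 0)
/-- K = λxy.x -/
def K : Tm := lam (lam (var 1))
/-- B = λxyz.(x (y z)) -/
def B : Tm := lam (lam (lam (app (var 2) (app (var 1) (var 0)))))
/-- C = λxyz.(x z y) -/
def C : Tm := lam (lam (lam (app (app (var 2) (var 0)) (var 1))))
/-- S = λxyz.(x z (y z)) -/
def S : Tm := lam (lam (lam (app (app (var 2) (var 0)) (app (var 1) (var 0)))))

/-- body of the n-th Church numeral: s (s ⋯ (s z)⋯), n times. -/
def churchBody : ℕ → Tm
  | 0 => var 0
  | n + 1 => app (var 1) (churchBody n)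

/-- The n-th Church numeral c_n = λsz.(s (s ⋯ (s z)⋯)). -/
def church (n : ℕ) : Tm := lam (lam (churchBody n))

/-- n nested λ-abstractions. -/
def lamN : ℕ → Tm → Tm
  | 0, t => t
  | n + 1, t => lam (lamN n t)

/-- Shift all free variables up by n. -/
def liftN (n : ℕ) (t : Tm) : Tm := (lift 0)^[n] t

/-- t (var (a+k-1)) ⋯ (var (a+1)) (var a) : left-associated application of t
to k variables with descending indices. -/
def appVars (t : Tm) (a k : ℕ) : Tm :=
  ((List.range k).reverse).foldl (fun s i => app s (var (a + i))) t

/-- t (var a) (var (a+1)) ⋯ (var (a+k-1)) : left-associated application of t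
to k variables with ascending indices. -/
def appVarsAsc (t : Tm) (a k : ℕ) : Tm :=
  (List.range k).foldl (fun s i => app s (var (a + i))) t

/-- Left-associated application of t to a list of terms. -/
def appList (t : Tm) (l : List Tm) : Tm := l.foldl app t

/-- K_n = λp x_1…x_n. p -/
def Kn (n : ℕ) : Tm := lamN (n + 1) (var n)
/-- S_n = λpq x_1…x_n.(p x_1⋯x_n (q x_1⋯x_n)) -/
def Sn (n : ℕ) : Tm :=
  lamN (n + 2) (app (appVars (var (n + 1)) 0 n) (appVars (var n) 0 n))
/-- B_n = λpq x_1…x_n.(p (q x_1⋯x_n)) -/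
def Bn (n : ℕ) : Tm := lamN (n + 2) (app (var (n + 1)) (appVars (var n) 0 n))
/-- C_n = λpq x_1…x_n.(p x_1⋯x_n q) -/
def Cn (n : ℕ) : Tm := lamN (n + 2) (app (appVars (var (n + 1)) 0 n) (var n))


/-- Ordered pair ⟨P, Q⟩ = λz.(z P Q), z fresh. -/
def pair (P Q : Tm) : Tm := lam (app (app (var 0) (lift 0 P)) (lift 0 Q))

/-- True = λxy.x -/
def TrueTm : Tm := lam (lam (var 1))
/-- False = λxy.y -/
def FalseTm : Tm := lam (lam (var 0))
/-- Zero = λn.(n (λx.False) True), the zero-predicate on Church numerals. -/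
def ZeroTm : Tm := lam (app (app (var 0) (lam FalseTm)) TrueTm)
/-- Succ = λnsz.(s (n s z)), the successor on Church numerals. -/
def SuccTm : Tm := lam (lam (lam (app (var 1) (app (app (var 2) (var 1)) (var 0)))))

/-- M = λmba.(Zero b ⟨m, (Succ a)⟩ (D b)), with m, b, a fresh (in particular
b not free in D, hence D is shifted under the three binders). -/
def Mker (D : Tm) : Tm :=
  lam (lam (lam (app (app (app ZeroTm (var 1))
    (pair (var 2) (app SuccTm (var 0)))) (app (liftN 3 D) (var 1)))))

/-- X = ⟨M, c_0⟩. -/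
def X (D : Tm) : Tm := pair (Mker D) (church 0)

/-- Left-associated application of m+1 copies of t: t t ⋯ t. -/
def selfApps (t : Tm) : ℕ → Tm
  | 0 => t
  | m + 1 => app (selfApps t m) t

/-! ### Auxiliary lemmas -/

theorem lift_lift (t : Tm) : ∀ c c', c' ≤ c →
    lift (c + 1) (lift c' t) = lift c' (lift c t) := by
  induction t with
  | var n =>
    intro c c' h; simp only [lift]
    split_ifs <;> simp only [lift] <;> split_ifs <;>
      first | rfl | (congr 1; omega) | (exfalso; omega)
  | app a b iha ihb => intro c c' h; simp [lift, iha _ _ h, ihb _ _ h]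
  | lam a ih => intro c c' h; simp [lift, ih (c+1) (c'+1) (by omega)]

theorem subst_lift (t : Tm) : ∀ k s, subst k s (lift k t) = t := by
  induction t with
  | var n =>
    intro k s; simp only [lift]
    split_ifs <;> simp only [subst] <;> split_ifs <;>
      first | rfl | (congr 1; omega) | (exfalso; omega)
  | app a b iha ihb => intro k s; simp [lift, subst, iha, ihb]
  | lam a ih => intro k s; simp [lift, subst, ih]

theorem subst_lift_comm (t : Tm) : ∀ c k s, c ≤ k →
    subst (k + 1) (lift c s) (lift c t) = lift c (subst k s t) := by
  induction t with
  | var n =>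
    intro c k s h; simp only [lift, subst]
    split_ifs <;> simp only [subst, lift] <;> split_ifs <;>
      first | rfl | (congr 1; omega) | (exfalso; omega) |
        (simp only [lift]; split_ifs <;> first | rfl | (congr 1; omega) | (exfalso; omega))
  | app a b iha ihb => intro c k s h; simp [lift, subst, iha _ _ _ h, ihb _ _ _ h]
  | lam a ih =>
    intro c k s h
    simp only [lift, subst]
    rw [← lift_lift s c 0 (by omega), ih (c+1) (k+1) (lift 0 s) (by omega)]

/-- All free variables are `< c`. -/
def closedAt (c : ℕ) : Tm → Bool
  | var n => n < c
  | app a b => closedAt c a && closedAt c b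
  | lam a => closedAt (c + 1) a

theorem lift_closedAt (t : Tm) : ∀ c c', c ≤ c' → closedAt c t = true →
    lift c' t = t := by
  induction t with
  | var n => intro c c' h hc; simp only [closedAt, decide_eq_true_eq] at hc
             simp [lift]; omega
  | app a b iha ihb => intro c c' h hc; simp only [closedAt, Bool.and_eq_true] at hc
                       simp [lift, iha _ _ h hc.1, ihb _ _ h hc.2]
  | lam a ih => intro c c' h hc; simp only [closedAt] at hc
                simp [lift, ih (c+1) (c'+1) (by omega) hc]

theorem subst_closedAt (t : Tm) : ∀ c k s, c ≤ k → closedAt c t = true →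
    subst k s t = t := by
  induction t with
  | var n => intro c k s h hc; simp only [closedAt, decide_eq_true_eq] at hc
             simp only [subst]; split_ifs <;> first | rfl | omega
  | app a b iha ihb => intro c k s h hc; simp only [closedAt, Bool.and_eq_true] at hc
                       simp [subst, iha _ _ _ h hc.1, ihb _ _ _ h hc.2]
  | lam a ih => intro c k s h hc; simp only [closedAt] at hc
                simp [subst, ih (c+1) (k+1) _ (by omega) hc]

theorem closed_churchBody (m : ℕ) : closedAt 2 (churchBody m) = true := by
  induction m with
  | zero => decide
  | succ m ih => simp [churchBody, closedAt, ih]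

theorem closed_church (m : ℕ) : closedAt 0 (church m) = true := by
  show closedAt 2 (churchBody m) = true; exact closed_churchBody m

theorem lift_church (c m : ℕ) : lift c (church m) = church m :=
  lift_closedAt _ 0 c (Nat.zero_le _) (closed_church m)

theorem subst_church (k : ℕ) (s : Tm) (m : ℕ) : subst k s (church m) = church m :=
  subst_closedAt _ 0 k s (Nat.zero_le _) (closed_church m)

theorem lift_pair (c : ℕ) (A B : Tm) :
    lift c (pair A B) = pair (lift c A) (lift c B) := by
  simp [pair, lift, lift_lift A c 0 (Nat.zero_le _), lift_lift B c 0 (Nat.zero_le _)]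

theorem subst_pair (k : ℕ) (s A B : Tm) :
    subst k s (pair A B) = pair (subst k s A) (subst k s B) := by
  simp [pair, subst, subst_lift_comm A 0 k s (Nat.zero_le _),
    subst_lift_comm B 0 k s (Nat.zero_le _)]

/-! ### Reduction infrastructure -/

theorem red_refl (a : Tm) : Reduces a a := Relation.ReflTransGen.refl

theorem red_step {a b : Tm} (h : Step a b) : Reduces a b :=
  Relation.ReflTransGen.single h

theorem red_trans {a b c : Tm} (h1 : Reduces a b) (h2 : Reduces b c) : Reduces a c :=
  Relation.ReflTransGen.trans h1 h2

theorem red_appL {a a' : Tm} (b : Tm) (h : Reduces a a') :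
    Reduces (app a b) (app a' b) :=
  Relation.ReflTransGen.lift (fun x => app x b) (fun _ _ hs => Step.appL b hs) _ _ h

theorem red_appR (a : Tm) {b b' : Tm} (h : Reduces b b') :
    Reduces (app a b) (app a b') :=
  Relation.ReflTransGen.lift (fun x => app a x) (fun _ _ hs => Step.appR a hs) _ _ h

theorem red_betaEta {a b : Tm} (h : Reduces a b) : BetaEta a b := by
  induction h with
  | refl => exact Relation.EqvGen.refl _
  | tail _ hs ih => exact Relation.EqvGen.trans _ _ _ ih (Relation.EqvGen.rel _ _ hs)

/-! ### Computation lemmas -/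

theorem pair_app (A B Z : Tm) : Reduces (app (pair A B) Z) (app (app Z A) B) := by
  have := Step.beta (app (app (var 0) (lift 0 A)) (lift 0 B)) Z
  simpa [pair, subst, subst_lift] using red_step this

theorem true_app (A B : Tm) : Reduces (app (app TrueTm A) B) A := by
  refine red_trans (red_appL B (red_step (Step.beta (lam (var 1)) A))) ?_
  have h2 := Step.beta (subst 1 (lift 0 A) (var 1)) B
  simpa [subst, subst_lift] using red_step h2

theorem false_app (A B : Tm) : Reduces (app (app FalseTm A) B) B := by
  refine red_trans (red_appL B (red_step (Step.beta (lam (var 0)) A))) ?_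
  have h2 := Step.beta (subst 1 (lift 0 A) (var 0)) B
  simpa [subst] using red_step h2

theorem beta3 (b P Q R : Tm) :
    Reduces (app (app (app (lam (lam (lam b))) P) Q) R)
      (subst 0 R (subst 1 (lift 0 Q) (subst 2 (lift 0 (lift 0 P)) b))) := by
  refine red_trans (red_appL R (red_appL Q (red_step (Step.beta (lam (lam b)) P)))) ?_
  refine red_trans (red_appL R (red_step
    (Step.beta (lam (subst 2 (lift 0 (lift 0 P)) b)) Q))) ?_
  exact red_step (Step.beta _ R)

/-- iterated application A (A ⋯ (A B)). -/
def churchIter (A B : Tm) : ℕ → Tm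
  | 0 => B
  | m + 1 => app A (churchIter A B m)

theorem churchBody_subst (A B : Tm) (m : ℕ) :
    subst 0 B (subst 1 (lift 0 A) (churchBody m)) = churchIter A B m := by
  induction m with
  | zero => simp [churchBody, subst, churchIter]
  | succ m ih => simp [churchBody, subst, churchIter, ih, subst_lift]

theorem church_app (A B : Tm) (m : ℕ) :
    Reduces (app (app (church m) A) B) (churchIter A B m) := by
  refine red_trans (red_appL B (red_step (Step.beta (lam (churchBody m)) A))) ?_
  have h2 := Step.beta (subst 1 (lift 0 A) (churchBody m)) B
  rw [churchBody_subst] at h2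
  exact red_step h2

theorem churchIter_var (m : ℕ) : churchIter (var 1) (var 0) m = churchBody m := by
  induction m with
  | zero => rfl
  | succ m ih => simp [churchIter, churchBody, ih]

theorem succ_church (m : ℕ) : Reduces (app SuccTm (church m)) (church (m + 1)) := by
  refine red_trans (red_step (Step.beta _ (church m))) ?_
  simp only [subst, lift_church, subst_church]
  norm_num
  refine Relation.ReflTransGen.lift (fun x => lam (lam (app (var 1) x)))
    (fun _ _ hs => Step.lamCongr (Step.lamCongr (Step.appR _ hs))) _ _ ?_
  have := church_app (var 1) (var 0) m
  rw [churchIter_var] at this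
  exact this

theorem zero_church_pos (k : ℕ) (hk : 1 ≤ k) :
    Reduces (app ZeroTm (church k)) FalseTm := by
  refine red_trans (red_step (Step.beta _ (church k))) ?_
  have h1 : subst 0 (church k) (app (app (var 0) (lam FalseTm)) TrueTm)
      = app (app (church k) (lam FalseTm)) TrueTm := by
    simp [subst, FalseTm, TrueTm, lift]
  rw [h1]
  refine red_trans (church_app _ _ k) ?_
  obtain ⟨j, rfl⟩ : ∃ j, k = j + 1 := ⟨k - 1, by omega⟩
  have := Step.beta FalseTm (churchIter (lam FalseTm) TrueTm j)
  simpa [churchIter, subst_closedAt FalseTm 0 0 _ (le_refl _) (by decide)]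
    using red_step this

theorem zero_church_zero : Reduces (app ZeroTm (church 0)) TrueTm := by
  refine red_trans (red_step (Step.beta _ (church 0))) ?_
  have h1 : subst 0 (church 0) (app (app (var 0) (lam FalseTm)) TrueTm)
      = app (app (church 0) (lam FalseTm)) TrueTm := by
    simp [subst, FalseTm, TrueTm, lift]
  rw [h1]
  exact church_app _ _ 0

theorem mker_app (D P Q R : Tm) :
    Reduces (app (app (app (Mker D) P) Q) R)
      (app (app (app ZeroTm Q) (pair P (app SuccTm R))) (app D Q)) := by
  have h := beta3 (app (app (app ZeroTm (var 1))
    (pair (var 2) (app SuccTm (var 0)))) (app (liftN 3 D) (var 1))) P Q R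
  have hz : ∀ k s, subst k s ZeroTm = ZeroTm := fun k s =>
    subst_closedAt ZeroTm 0 k s (Nat.zero_le _) (by decide)
  have hs : ∀ k s, subst k s SuccTm = SuccTm := fun k s =>
    subst_closedAt SuccTm 0 k s (Nat.zero_le _) (by decide)
  have hl3 : liftN 3 D = lift 0 (lift 0 (lift 0 D)) := rfl
  have hD : subst 0 R (subst 1 (lift 0 Q) (subst 2 (lift 0 (lift 0 P))
      (lift 0 (lift 0 (lift 0 D))))) = D := by
    rw [subst_lift_comm _ 0 1 _ (by omega), subst_lift_comm _ 0 0 _ (le_refl _),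
      subst_lift, subst_lift_comm _ 0 0 _ (le_refl _), subst_lift, subst_lift]
  have hP : subst 0 R (subst 1 (lift 0 Q) (lift 0 (lift 0 P))) = P := by
    rw [subst_lift_comm _ 0 0 _ (le_refl _), subst_lift, subst_lift]
  have hQ : subst 0 R (lift 0 Q) = Q := subst_lift _ _ _
  have key : subst 0 R (subst 1 (lift 0 Q) (subst 2 (lift 0 (lift 0 P))
      (app (app (app ZeroTm (var 1)) (pair (var 2) (app SuccTm (var 0))))
        (app (liftN 3 D) (var 1)))))
      = app (app (app ZeroTm Q) (pair P (app SuccTm R))) (app D Q) := by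
    have sapp : ∀ k s a b, subst k s (app a b) = app (subst k s a) (subst k s b) :=
      fun _ _ _ _ => rfl
    rw [hl3]
    simp only [sapp, subst_pair, hz, hs,
      show ∀ s : Tm, subst 2 s (var 1) = var 1 from fun _ => rfl,
      show ∀ s : Tm, subst 1 s (var 1) = s from fun _ => rfl,
      show ∀ s : Tm, subst 2 s (var 0) = var 0 from fun _ => rfl,
      show ∀ s : Tm, subst 1 s (var 0) = var 0 from fun _ => rfl,
      show ∀ s : Tm, subst 2 s (var 2) = s from fun _ => rfl,
      show ∀ s : Tm, subst 0 s (var 0) = s from fun _ => rfl,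
      hQ, hP, hD]
  rw [key] at h
  exact h

theorem selfApps_red (D : Tm) (m : ℕ) (W : Tm) :
    Reduces (app (selfApps (X D) m) W) (app (app W (Mker D)) (church m)) := by
  induction m generalizing W with
  | zero => exact pair_app (Mker D) (church 0) W
  | succ m ih =>
    show Reduces (app (app (selfApps (X D) m) (X D)) W) _
    refine red_trans (red_appL W (ih (X D))) ?_
    -- app (app (X D) (Mker D)) (church m)  applied to W
    refine red_trans (red_appL W (red_appL (church m)
      (pair_app (Mker D) (church 0) (Mker D)))) ?_
    -- (Mker D) (Mker D) (church 0) (church m), i.e. mker_app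
    refine red_trans (red_appL W (mker_app D (Mker D) (church 0) (church m))) ?_
    refine red_trans (red_appL W (red_appL (app D (church 0))
      (red_appL (pair (Mker D) (app SuccTm (church m))) zero_church_zero))) ?_
    refine red_trans (red_appL W (true_app _ _)) ?_
    refine red_trans (pair_app (Mker D) (app SuccTm (church m)) W) ?_
    exact red_appR _ (succ_church m)

/-- one-point basis maker correctness.  If (D c_k) =βη E_k for
each 1 ≤ k ≤ n, then with X = ⟨M, c_0⟩ as above, applying X to the
left-associated application of k+1 copies of X yields E_k:
(X (X X ⋯ X)) =βη E_k. -/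
theorem one_point_basis (n : ℕ) (hn : 1 ≤ n) (E : ℕ → Tm) (D : Tm)
    (hD : ∀ k, 1 ≤ k → k ≤ n → BetaEta (app D (church k)) (E k)) :
    ∀ k, 1 ≤ k → k ≤ n → BetaEta (app (X D) (selfApps (X D) k)) (E k) := by
  intro k hk1 hkn
  have hred : Reduces (app (X D) (selfApps (X D) k)) (app D (church k)) := by
    refine red_trans (pair_app (Mker D) (church 0) (selfApps (X D) k)) ?_
    refine red_trans (red_appL (church 0) (selfApps_red D k (Mker D))) ?_
    refine red_trans (mker_app D (Mker D) (church k) (church 0)) ?_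
    refine red_trans (red_appL (app D (church k)) (red_appL _ (zero_church_pos k hk1))) ?_
    exact false_app _ _
  exact Relation.EqvGen.trans _ _ _ (red_betaEta hred) (hD k hk1 hkn)

end Tm
end LC
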